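/- Let μ be a positive atomless finite measure on [t,T] with μ((t,T)) > 0. Then there exists ζ₁ ∈ ℝ with ∫_t^T (T−s)(ζ₁−s) dμ(s) = 0, and for m(s) := (T−s)(ζ₂−s) with a suitable ζ₂ < ζ₁ one has simultaneously ∫_t^T (e^{m(s)} − 1) dμ(s) > 0 and ∫_t^T m(s) dμ(s) < 0. -/

import Mathlib

open MeasureTheory

/-- For a positive atomless finite measure `μ` supported in `[t,T]` with
`μ((t,T)) > 0`, there exists `ζ₁` with `∫ (T−s)(ζ₁−s)dμ(s) = 0`, and some `ζ₂ < ζ₁`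
with simultaneously `∫ (e^{(T−s)(ζ₂−s)} − 1)dμ(s) > 0` and `∫ (T−s)(ζ₂−s)dμ(s) < 0`. -/
theorem stmt_15 (t T : ℝ) (hT : t < T) (μ : Measure ℝ) [IsFiniteMeasure μ] [NullSingletonClass μ]
    (hsupp : μ (Set.Icc t T)ᶜ = 0) (hpos : 0 < μ (Set.Ioo t T)) :
    ∃ ζ₁ : ℝ, (∫ s, (T - s) * (ζ₁ - s) ∂μ) = 0 ∧
      ∃ ζ₂ : ℝ, ζ₂ < ζ₁ ∧
        (0 < ∫ s, (Real.exp ((T - s) * (ζ₂ - s)) - 1) ∂μ) ∧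
        (∫ s, (T - s) * (ζ₂ - s) ∂μ) < 0 := by
  have hK : ∀ᵐ s ∂μ, s ∈ Set.Icc t T := by
    rw [ae_iff]
    simpa [Set.compl_def] using hsupp
  -- every continuous function is integrable w.r.t. μ
  have hint : ∀ f : ℝ → ℝ, Continuous f → Integrable f μ := by
    intro f hf
    obtain ⟨C, hC⟩ :=
      (isCompact_Icc (a := t) (b := T)).exists_bound_of_continuousOn hf.continuousOn
    exact (integrable_const C).mono' hf.aestronglyMeasurable
      (hK.mono fun s hs => hC s hs)
  set a := ∫ s, (T - s) ∂μ with ha_def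
  set b := ∫ s, (T - s) * s ∂μ with hb_def
  have hIa : Integrable (fun s : ℝ => T - s) μ := hint _ (by fun_prop)
  have ha : 0 < a := by
    rw [ha_def, integral_pos_iff_support_of_nonneg_ae
      (hK.mono fun s hs => sub_nonneg.2 hs.2) hIa]
    refine lt_of_lt_of_le hpos (measure_mono ?_)
    intro s hs
    simp only [Function.mem_support]
    have : s < T := hs.2
    intro h
    nlinarith [sub_ne_zero.2 (ne_of_gt this)]
  have hlin : ∀ ζ : ℝ, (∫ s, (T - s) * (ζ - s) ∂μ) = ζ * a - b := by
    intro ζ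
    have heq : (fun s : ℝ => (T - s) * (ζ - s))
        = fun s => ζ * (T - s) - (T - s) * s := by
      funext s; ring
    rw [heq, integral_sub (hIa.const_mul ζ) (hint _ (by fun_prop)),
      integral_const_mul]
  set ζ₁ := b / a with hζ₁_def
  have hζ₁a : ζ₁ * a = b := div_mul_cancel₀ b (ne_of_gt ha)
  have h1 : (∫ s, (T - s) * (ζ₁ - s) ∂μ) = 0 := by
    rw [hlin, hζ₁a, sub_self]
  -- the exponential integral at ζ₁ is positive
  set I := ∫ s, (Real.exp ((T - s) * (ζ₁ - s)) - 1) ∂μ with hI_def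
  have hcexp : Continuous fun s : ℝ => Real.exp ((T - s) * (ζ₁ - s)) - 1 := by
    fun_prop
  have hIsplit :
      (∫ s, (Real.exp ((T - s) * (ζ₁ - s)) - 1 - (T - s) * (ζ₁ - s)) ∂μ) = I := by
    rw [integral_sub (hint _ hcexp) (hint _ (by fun_prop)), h1, sub_zero]
  have hI : 0 < I := by
    rw [← hIsplit]
    rw [integral_pos_iff_support_of_nonneg_ae ?_ (hint _ (by fun_prop))]
    · have hsub : Set.Ioo t T \ {ζ₁} ⊆ Function.support
          fun s => Real.exp ((T - s) * (ζ₁ - s)) - 1 - (T - s) * (ζ₁ - s) := by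
        intro s hs
        obtain ⟨hs1, hs2⟩ := hs
        simp only [Function.mem_support]
        have hTs : 0 < T - s := sub_pos.2 hs1.2
        have hne : (T - s) * (ζ₁ - s) ≠ 0 := by
          apply mul_ne_zero (ne_of_gt hTs)
          simp only [Set.mem_singleton_iff] at hs2
          exact sub_ne_zero.2 fun h => hs2 h.symm
        have := Real.add_one_lt_exp hne
        intro h
        nlinarith
      calc (0:ENNReal) < μ (Set.Ioo t T) := hpos
        _ = μ (Set.Ioo t T \ {ζ₁}) := by
            rw [measure_diff_null (measure_singleton ζ₁)]
        _ ≤ _ := measure_mono hsub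
    · filter_upwards with s
      have := Real.add_one_le_exp ((T - s) * (ζ₁ - s))
      simp only [Pi.zero_apply]
      linarith
  set J := ∫ s, Real.exp ((T - s) * (ζ₁ - s)) * (T - s) ∂μ with hJ_def
  have hJint : Integrable (fun s : ℝ => Real.exp ((T - s) * (ζ₁ - s)) * (T - s)) μ :=
    hint _ (by fun_prop)
  have hJ : 0 ≤ J := by
    refine integral_nonneg_of_ae (hK.mono fun s hs => ?_)
    have h1 : (0:ℝ) ≤ T - s := sub_nonneg.2 hs.2
    positivity
  set ε := I / (J + 1) with hε_def
  have hε : 0 < ε := div_pos hI (by linarith)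
  have hεJ1 : ε * (J + 1) = I := div_mul_cancel₀ I (by linarith)
  refine ⟨ζ₁, h1, ζ₁ - ε, by linarith, ?_, ?_⟩
  · -- exponential integral at ζ₂ is positive
    have hptwise : ∀ s ∈ Set.Icc t T,
        Real.exp ((T - s) * (ζ₁ - s)) - 1 - ε * (Real.exp ((T - s) * (ζ₁ - s)) * (T - s))
          ≤ Real.exp ((T - s) * (ζ₁ - ε - s)) - 1 := by
      intro s hs
      have hTs : (0:ℝ) ≤ T - s := sub_nonneg.2 hs.2
      have hE : 0 < Real.exp ((T - s) * (ζ₁ - s)) := Real.exp_pos _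
      have hy : -(ε * (T - s)) + 1 ≤ Real.exp (-(ε * (T - s))) :=
        Real.add_one_le_exp _
      have hsplit : (T - s) * (ζ₁ - ε - s) = (T - s) * (ζ₁ - s) + -(ε * (T - s)) := by
        ring
      rw [hsplit, Real.exp_add]
      nlinarith [mul_le_mul_of_nonneg_left hy (le_of_lt hE)]
    have hmono :
        (∫ s, (Real.exp ((T - s) * (ζ₁ - s)) - 1
            - ε * (Real.exp ((T - s) * (ζ₁ - s)) * (T - s))) ∂μ)
          ≤ ∫ s, (Real.exp ((T - s) * (ζ₁ - s - ε)) - 1) ∂μ := by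
      refine integral_mono_ae (hint _ (by fun_prop)) (hint _ (by fun_prop))
        (hK.mono fun s hs => ?_)
      have := hptwise s hs
      have harg : ζ₁ - s - ε = ζ₁ - ε - s := by ring
      dsimp only
      rw [harg]
      exact this
    have hval :
        (∫ s, (Real.exp ((T - s) * (ζ₁ - s)) - 1
            - ε * (Real.exp ((T - s) * (ζ₁ - s)) * (T - s))) ∂μ) = I - ε * J := by
      rw [integral_sub (hint _ hcexp) (hJint.const_mul ε), integral_const_mul]
    have hgoal : (0:ℝ) < I - ε * J := by nlinarith
    have harg2 : (fun s : ℝ => Real.exp ((T - s) * (ζ₁ - ε - s)) - 1)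
        = fun s => Real.exp ((T - s) * (ζ₁ - s - ε)) - 1 := by
      funext s; ring_nf
    calc (0:ℝ) < I - ε * J := hgoal
      _ ≤ ∫ s, (Real.exp ((T - s) * (ζ₁ - s - ε)) - 1) ∂μ := hval ▸ hmono
      _ = ∫ s, (Real.exp ((T - s) * (ζ₁ - ε - s)) - 1) ∂μ := by rw [harg2]
  · rw [hlin]
    nlinarith
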